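/- Let 0 < r < r' < 1 < R' < R, and for n ∈ ℤ set d_n = √(r^{2n} + R^{2n}) (integer powers, i.e. zpow). Let c : ℤ → ℂ be a sequence with ∑_{n ∈ ℤ} |c_n|² < ∞. Then for every N ∈ ℕ and every z ∈ ℂ with r' ≤ |z| ≤ R', the series ∑_{|n| ≥ N} c_n · z^n / d_n converges absolutely and satisfies | ∑_{|n| ≥ N} c_n z^n / d_n | ≤ ( ∑_{n ∈ ℤ} |c_n|² )^{1/2} · ( (R'/R)^{2N} / (1 − (R'/R)²) + (r/r')^{2N} / (1 − (r/r')²) )^{1/2}. -/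

import Mathlib

open Real

private lemma geom_tail_hasSum {Q : ℝ} (hQ0 : 0 ≤ Q) (hQ1 : Q < 1) (N : ℕ) :
    HasSum (fun m : ℕ => if N ≤ m then Q ^ m else 0) (Q ^ N * (1 - Q)⁻¹) := by
  have h := (hasSum_geometric_of_lt_one hQ0 hQ1).mul_left (Q ^ N)
  have hzero : (∑ i ∈ Finset.range N, (if N ≤ i then Q ^ i else 0)) = 0 :=
    Finset.sum_eq_zero fun i hi => if_neg (Nat.not_le.mpr (Finset.mem_range.mp hi))
  refine (hasSum_nat_add_iff' (f := fun m : ℕ => if N ≤ m then Q ^ m else 0) N).mp ?_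
  rw [hzero, sub_zero]
  have hfun : (fun n : ℕ => (if N ≤ n + N then Q ^ (n + N) else 0)) = fun n => Q ^ N * Q ^ n := by
    funext n
    rw [if_pos (Nat.le_add_left N n), pow_add, mul_comm]
  rw [hfun]
  exact h

private lemma tsum_CS {ι : Type*} (f g : ι → ℝ) (hf : ∀ i, 0 ≤ f i) (hg : ∀ i, 0 ≤ g i)
    (hf2 : Summable fun i => f i ^ 2) (hg2 : Summable fun i => g i ^ 2) :
    Summable (fun i => f i * g i) ∧
      (∑' i, f i * g i) ≤ Real.sqrt (∑' i, f i ^ 2) * Real.sqrt (∑' i, g i ^ 2) := by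
  have hs : Summable fun i => f i * g i := by
    refine Summable.of_nonneg_of_le (fun i => mul_nonneg (hf i) (hg i)) (fun i => ?_)
      (((hf2.add hg2)).mul_left (1 / 2 : ℝ))
    have := two_mul_le_add_sq (f i) (g i)
    nlinarith
  refine ⟨hs, Summable.tsum_le_of_sum_le hs fun s => ?_⟩
  have h1 : (∑ i ∈ s, f i * g i)
      ≤ Real.sqrt (∑ i ∈ s, f i ^ 2) * Real.sqrt (∑ i ∈ s, g i ^ 2) := by
    rw [← Real.sqrt_mul (Finset.sum_nonneg fun i _ => sq_nonneg (f i))]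
    exact Real.le_sqrt_of_sq_le (Finset.sum_mul_sq_le_sq_mul_sq s f g)
  refine h1.trans (mul_le_mul ?_ ?_ (Real.sqrt_nonneg _) (Real.sqrt_nonneg _)) <;>
    exact Real.sqrt_le_sqrt (Summable.sum_le_tsum s (fun i _ => sq_nonneg _) (by assumption))

theorem stmt_1 (r r' R' R : ℝ) (h0 : 0 < r) (h1 : r < r') (h2 : r' < 1)
    (h3 : 1 < R') (h4 : R' < R)
    (d : ℤ → ℝ) (hd : ∀ n : ℤ, d n = Real.sqrt (r ^ (2 * n) + R ^ (2 * n)))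
    (c : ℤ → ℂ) (hc : Summable fun n : ℤ => ‖c n‖ ^ 2)
    (N : ℕ) (z : ℂ) (hz1 : r' ≤ ‖z‖) (hz2 : ‖z‖ ≤ R') :
    Summable (fun n : {n : ℤ // (N : ℤ) ≤ |n|} =>
      ‖c n.1 * z ^ n.1 / (d n.1 : ℂ)‖) ∧
    ‖∑' n : {n : ℤ // (N : ℤ) ≤ |n|}, c n.1 * z ^ n.1 / (d n.1 : ℂ)‖ ≤
      Real.sqrt (∑' n : ℤ, ‖c n‖ ^ 2) *
      Real.sqrt ((R' / R) ^ (2 * N) / (1 - (R' / R) ^ 2)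
        + (r / r') ^ (2 * N) / (1 - (r / r') ^ 2)) := by
  have hr'0 : 0 < r' := h0.trans h1
  have hR0 : 0 < R := by linarith
  have hz0 : 0 < ‖z‖ := lt_of_lt_of_le hr'0 hz1
  set Q : ℝ := (R' / R) ^ 2 with hQdef
  set P : ℝ := (r / r') ^ 2 with hPdef
  have hQ0 : 0 ≤ Q := sq_nonneg _
  have hP0 : 0 ≤ P := sq_nonneg _
  have hq1 : R' / R < 1 := (div_lt_one hR0).mpr h4
  have hp1 : r / r' < 1 := (div_lt_one hr'0).mpr h1
  have hQ1 : Q < 1 := by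
    rw [hQdef]
    nlinarith [div_nonneg (by linarith : (0:ℝ) ≤ R') hR0.le]
  have hP1 : P < 1 := by
    rw [hPdef]
    nlinarith [div_nonneg h0.le hr'0.le]
  have hdpos : ∀ n : ℤ, 0 < d n := by
    intro n
    rw [hd n]
    exact Real.sqrt_pos.mpr (by positivity)
  have hdsq : ∀ n : ℤ, d n ^ 2 = r ^ (2 * n) + R ^ (2 * n) := by
    intro n
    rw [hd n, Real.sq_sqrt (by positivity)]
  -- the majorant
  set G : ℤ → ℝ := fun n => if 0 ≤ n then (if (N : ℤ) ≤ n then Q ^ n.toNat else 0)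
      else (if (N : ℤ) ≤ -n then P ^ n.natAbs else 0) with hGdef
  have hG0 : ∀ n : ℤ, 0 ≤ G n := by
    intro n
    rw [hGdef]
    dsimp only
    split_ifs <;> positivity
  have hGpos : HasSum (fun m : ℕ => G (m : ℤ)) (Q ^ N * (1 - Q)⁻¹) := by
    have h := geom_tail_hasSum hQ0 hQ1 N
    have e : (fun m : ℕ => G (m : ℤ)) = fun m : ℕ => if N ≤ m then Q ^ m else 0 := by
      funext m
      rw [hGdef]
      simp [Int.natCast_nonneg, Nat.cast_le]
    rw [e]
    exact h
  have hGneg : HasSum (fun m : ℕ => G (-(m + 1 : ℤ)))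
      (P ^ N * (1 - P)⁻¹ - ∑ i ∈ Finset.range 1, (if N ≤ i then P ^ i else 0)) := by
    have h := (hasSum_nat_add_iff' (f := fun m : ℕ => if N ≤ m then P ^ m else 0) 1).mpr
      (geom_tail_hasSum hP0 hP1 N)
    have e : (fun m : ℕ => G (-(m + 1 : ℤ)))
        = fun m : ℕ => if N ≤ m + 1 then P ^ (m + 1) else 0 := by
      funext m
      rw [hGdef]
      have h1 : ¬ (0 : ℤ) ≤ -((m : ℤ) + 1) := by omega
      have h2 : (-((m : ℤ) + 1)).natAbs = m + 1 := by omega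
      have h3 : ((N : ℤ) ≤ -(-((m : ℤ) + 1))) ↔ N ≤ m + 1 := by omega
      simp only [if_neg h1, h2, h3]
    rw [e]
    exact h
  have hGsum : HasSum G (Q ^ N * (1 - Q)⁻¹ + (P ^ N * (1 - P)⁻¹ -
      ∑ i ∈ Finset.range 1, (if N ≤ i then P ^ i else 0))) :=
    HasSum.of_nat_of_neg_add_one hGpos hGneg
  have hGsummable : Summable G := hGsum.summable
  have htsumG : ∑' n, G n ≤ Q ^ N * (1 - Q)⁻¹ + P ^ N * (1 - P)⁻¹ := by
    rw [hGsum.tsum_eq]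
    have h5 : (0:ℝ) ≤ ∑ i ∈ Finset.range 1, (if N ≤ i then P ^ i else 0) := by
      refine Finset.sum_nonneg fun i _ => ?_
      split_ifs <;> positivity
    linarith
  -- pointwise bound
  have hkey : ∀ n : ℤ, (N : ℤ) ≤ |n| → (‖z‖ ^ n / d n) ^ 2 ≤ G n := by
    intro n hn
    rw [div_pow, hdsq n]
    rcases le_or_gt 0 n with hn0 | hn0
    · obtain ⟨m, rfl⟩ := Int.eq_ofNat_of_zero_le hn0
      rw [abs_of_nonneg hn0] at hn
      have hmN : N ≤ m := by exact_mod_cast hn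
      have hG : G (m : ℤ) = Q ^ m := by
        rw [hGdef]
        simp [Int.natCast_nonneg, Nat.cast_le.mpr hmN]
      rw [hG, zpow_natCast,
        show (2 * (m : ℤ)) = ((2 * m : ℕ) : ℤ) by push_cast; ring,
        zpow_natCast, zpow_natCast]
      have hQm : Q ^ m = R' ^ (2 * m) / R ^ (2 * m) := by
        rw [hQdef, ← pow_mul, div_pow]
      rw [hQm, div_le_div_iff₀ (by positivity) (by positivity)]
      have hzm : ‖z‖ ^ m ≤ R' ^ m := pow_le_pow_left₀ (norm_nonneg z) hz2 m
      have hz2' : (‖z‖ ^ m) ^ 2 ≤ (R' ^ m) ^ 2 :=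
        pow_le_pow_left₀ (by positivity) hzm 2
      have hR2 : R ^ (2 * m) = (R ^ m) ^ 2 := pow_mul' R 2 m
      have hR'2 : R' ^ (2 * m) = (R' ^ m) ^ 2 := pow_mul' R' 2 m
      nlinarith [pow_nonneg h0.le (2 * m), pow_pos hR0 (2 * m), pow_pos hR0 m,
        sq_nonneg (R' ^ m), pow_nonneg (norm_nonneg z) m]
    · set m := n.natAbs with hm
      have hnm : n = -(m : ℤ) := by omega
      rw [abs_of_neg hn0] at hn
      have hG : G n = P ^ m := by
        rw [hGdef]
        simp only [if_neg (not_le.mpr hn0), if_pos hn, ← hm]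
      rw [hG, show (2 * n) = -((2 * m : ℕ) : ℤ) by omega, hnm,
        zpow_neg, zpow_neg, zpow_neg, zpow_natCast, zpow_natCast, zpow_natCast]
      have hPm : P ^ m = r ^ (2 * m) / r' ^ (2 * m) := by
        rw [hPdef, ← pow_mul, div_pow]
      rw [inv_pow, ← pow_mul, hPm, div_le_div_iff₀ (by positivity) (by positivity)]
      have e1 : (‖z‖ ^ (m * 2))⁻¹ * r' ^ (2 * m) ≤ 1 := by
        rw [mul_comm, ← div_eq_mul_inv, div_le_one (by positivity)]
        calc r' ^ (2 * m) ≤ ‖z‖ ^ (2 * m) := pow_le_pow_left₀ hr'0.le hz1 _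
          _ = ‖z‖ ^ (m * 2) := by ring
      have e2 : (1 : ℝ) ≤ r ^ (2 * m) * ((r ^ (2 * m))⁻¹ + (R ^ (2 * m))⁻¹) := by
        rw [mul_add, mul_inv_cancel₀ (by positivity)]
        have : (0:ℝ) ≤ r ^ (2 * m) * (R ^ (2 * m))⁻¹ := by positivity
        linarith
      linarith
  -- assembly
  have habs : ∀ n : ℤ, ‖c n * z ^ n / (d n : ℂ)‖
      = ‖c n‖ * (‖z‖ ^ n / d n) := by
    intro n
    rw [norm_div, norm_mul, norm_zpow, Complex.norm_real, Real.norm_of_nonneg (hdpos n).le, mul_div_assoc]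
  have hGsub : Summable (fun n : {n : ℤ // (N : ℤ) ≤ |n|} => G n.1) :=
    hGsummable.comp_injective Subtype.val_injective
  have hwsq_sum : Summable (fun n : {n : ℤ // (N : ℤ) ≤ |n|} =>
      (‖z‖ ^ n.1 / d n.1) ^ 2) :=
    Summable.of_nonneg_of_le (fun n => sq_nonneg _) (fun n => hkey n.1 n.2) hGsub
  have hcsub : Summable (fun n : {n : ℤ // (N : ℤ) ≤ |n|} => ‖c n.1‖ ^ 2) :=
    hc.comp_injective Subtype.val_injective
  obtain ⟨hsum, hCS⟩ := tsum_CS (fun n : {n : ℤ // (N : ℤ) ≤ |n|} => ‖c n.1‖)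
    (fun n => ‖z‖ ^ n.1 / d n.1) (fun n => norm_nonneg _)
    (fun n => div_nonneg (zpow_nonneg (norm_nonneg _) _) (hdpos n.1).le) hcsub hwsq_sum
  have hsum' : Summable (fun n : {n : ℤ // (N : ℤ) ≤ |n|} =>
      ‖c n.1 * z ^ n.1 / (d n.1 : ℂ)‖) :=
    hsum.congr fun n => (habs n.1).symm
  refine ⟨hsum', ?_⟩
  have hleft : Real.sqrt (∑' n : {n : ℤ // (N : ℤ) ≤ |n|}, ‖c n.1‖ ^ 2)
      ≤ Real.sqrt (∑' n : ℤ, ‖c n‖ ^ 2) :=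
    Real.sqrt_le_sqrt (Summable.tsum_le_tsum_of_inj Subtype.val Subtype.val_injective
      (fun i _ => sq_nonneg _) (fun b => le_rfl) hcsub hc)
  have hright : Real.sqrt (∑' n : {n : ℤ // (N : ℤ) ≤ |n|},
        (‖z‖ ^ n.1 / d n.1) ^ 2)
      ≤ Real.sqrt ((R' / R) ^ (2 * N) / (1 - Q) + (r / r') ^ (2 * N) / (1 - P)) := by
    have t1 : (∑' n : {n : ℤ // (N : ℤ) ≤ |n|}, (‖z‖ ^ n.1 / d n.1) ^ 2)
        ≤ ∑' n : {n : ℤ // (N : ℤ) ≤ |n|}, G n.1 :=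
      Summable.tsum_le_tsum (fun n => hkey n.1 n.2) hwsq_sum hGsub
    have t2 : (∑' n : {n : ℤ // (N : ℤ) ≤ |n|}, G n.1) ≤ ∑' n, G n :=
      Summable.tsum_le_tsum_of_inj Subtype.val Subtype.val_injective
        (fun i _ => hG0 i) (fun b => le_rfl) hGsub hGsummable
    have hA : (R' / R) ^ (2 * N) / (1 - Q) + (r / r') ^ (2 * N) / (1 - P)
        = Q ^ N * (1 - Q)⁻¹ + P ^ N * (1 - P)⁻¹ := by
      rw [hQdef, hPdef, pow_mul, pow_mul]
      simp only [div_eq_mul_inv]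
    rw [hA]
    exact Real.sqrt_le_sqrt (by linarith)
  calc ‖∑' n : {n : ℤ // (N : ℤ) ≤ |n|}, c n.1 * z ^ n.1 / (d n.1 : ℂ)‖
      ≤ ∑' n : {n : ℤ // (N : ℤ) ≤ |n|}, ‖c n.1 * z ^ n.1 / (d n.1 : ℂ)‖ := by
        simpa using norm_tsum_le_tsum_norm
          (f := fun n : {n : ℤ // (N : ℤ) ≤ |n|} => c n.1 * z ^ n.1 / (d n.1 : ℂ))
          (by simpa using hsum')
    _ = ∑' n : {n : ℤ // (N : ℤ) ≤ |n|},
        ‖c n.1‖ * (‖z‖ ^ n.1 / d n.1) := tsum_congr fun n => habs n.1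
    _ ≤ Real.sqrt (∑' n : {n : ℤ // (N : ℤ) ≤ |n|}, ‖c n.1‖ ^ 2) *
        Real.sqrt (∑' n : {n : ℤ // (N : ℤ) ≤ |n|}, (‖z‖ ^ n.1 / d n.1) ^ 2) := hCS
    _ ≤ _ := mul_le_mul hleft hright (Real.sqrt_nonneg _) (Real.sqrt_nonneg _)
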